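/- Define a sequence of natural numbers by T(0) = 1 and T(n) = (2(n+1)/n)·T(n-1)² for n ≥ 1 (each such quotient is an integer). Then T(n) = 2^{2^n − 1}·(n+1)·∏_{i=2}^{n} i^{2^{n−i}} for all n ≥ 1. -/
import Mathlib


open Finset

/-- Let `T : ℕ → ℕ` with `T 0 = 1` and `T n = (2(n+1)/n)·T(n-1)²` for `n ≥ 1`
(stated over `ℚ`, since each quotient is an integer).  Then
`T n = 2^(2^n - 1) · (n+1) · ∏_{i=2}^{n} i^(2^(n-i))` for all `n ≥ 1`. -/
theorem farey_connected_spanning_subgraphs (T : ℕ → ℕ) (h0 : T 0 = 1)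
    (hrec : ∀ n, 1 ≤ n → (T n : ℚ) = 2 * (n + 1) / n * (T (n - 1) : ℚ) ^ 2) :
    ∀ n, 1 ≤ n →
      T n = 2 ^ (2 ^ n - 1) * (n + 1) * ∏ i ∈ Icc 2 n, i ^ (2 ^ (n - i)) := by
  have key : ∀ n, 1 ≤ n →
      (T n : ℚ) = 2 ^ (2 ^ n - 1) * (n + 1) * ∏ i ∈ Icc 2 n, (i : ℚ) ^ (2 ^ (n - i)) := by
    intro n hn
    induction n, hn using Nat.le_induction with
    | base =>
      have h := hrec 1 le_rfl
      simp [h0] at h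
      rw [h]
      norm_num [Finset.Icc_eq_empty (by norm_num : ¬ (2 : ℕ) ≤ 1)]
    | succ n hn ih =>
      have h := hrec (n + 1) (by omega)
      simp only [Nat.add_sub_cancel] at h
      rw [h, ih]
      rw [Finset.prod_Icc_succ_top (by omega : 2 ≤ n + 1)]
      have hp : ∏ i ∈ Icc 2 n, (i : ℚ) ^ (2 ^ (n + 1 - i))
          = (∏ i ∈ Icc 2 n, (i : ℚ) ^ (2 ^ (n - i))) ^ 2 := by
        rw [← Finset.prod_pow]
        refine Finset.prod_congr rfl fun i hi => ?_
        rw [← pow_mul]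
        congr 1
        have hi' := Finset.mem_Icc.mp hi
        have : n + 1 - i = (n - i) + 1 := by omega
        rw [this, pow_succ]
      rw [hp]
      have e : 2 ^ (n + 1) - 1 = (2 ^ n - 1) * 2 + 1 := by
        have h1 : 1 ≤ 2 ^ n := Nat.one_le_two_pow
        have h2 : 2 ^ (n + 1) = 2 * 2 ^ n := by rw [pow_succ]; ring
        omega
      rw [e]
      have hne : ((n : ℚ) + 1) ≠ 0 := by positivity
      push_cast
      simp only [Nat.sub_self, pow_zero, pow_one]
      field_simp
      ring
  intro n hn
  have h := key n hn
  have : ((2 ^ (2 ^ n - 1) * (n + 1) * ∏ i ∈ Icc 2 n, i ^ (2 ^ (n - i)) : ℕ) : ℚ)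
      = 2 ^ (2 ^ n - 1) * (n + 1) * ∏ i ∈ Icc 2 n, (i : ℚ) ^ (2 ^ (n - i)) := by
    push_cast
    ring
  exact_mod_cast h.trans this.symm
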